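/- Let ρ₀ be a representation of a finitely generated group Γ into the isometry group of a δ-hyperbolic geodesic space X whose orbit map sends a given family L of geodesics of the Cayley graph C_S(Γ) to (K₀,C₀)-quasi-geodesics. Then there exist K ≥ 1, C ≥ 0 and M ≥ 0, depending only on δ, K₀, C₀, such that any representation ρ whose orbit map is within distance C₀ of that of ρ₀ on the ball of radius M around the identity sends every geodesic of L to a (K,C)-quasi-geodesic. In particular the set of conjugacy classes of A-stable representations is open. -/

import Mathlib

open Set Metric

section AStable

variable {X : Type*} [MetricSpace X]

/-- Gromov product of `x,y` based at `w`. -/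
noncomputable def gp (w x y : X) : ℝ := (dist x w + dist y w - dist x y) / 2

lemma gp_nonneg (w x y : X) : 0 ≤ gp w x y := by
  have h := dist_triangle x w y
  unfold gp
  rw [dist_comm w y] at h
  linarith

lemma gp_le_left (w x y : X) : gp w x y ≤ dist x w := by
  have h := dist_triangle y x w
  unfold gp
  rw [dist_comm y x] at h
  linarith

lemma gp_comm (w x y : X) : gp w x y = gp w y x := by
  unfold gp; rw [dist_comm x y]; ring

lemma gp_le_add (w p x y : X) : gp w x y ≤ gp p x y + dist w p := by
  have h1 := dist_triangle x p w
  have h2 := dist_triangle y p w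
  unfold gp
  rw [dist_comm p w] at h1 h2
  linarith

variable (δ : ℝ)

/-- Four point condition, sum form. -/
lemma four_point (H : ∀ w x y z : X, min (gp w x y) (gp w y z) - δ ≤ gp w x z)
    (P Q R S : X) :
    dist P R + dist Q S ≤ max (dist P Q + dist R S) (dist P S + dist Q R) + 2 * δ := by
  have h := H S P Q R
  rcases min_le_iff.mp (by linarith : min (gp S P Q) (gp S Q R) ≤ gp S P R + δ) with h' | h'
  · unfold gp at h'
    refine le_trans ?_ (add_le_add_left (le_max_left _ _) _)
    linarith [dist_comm Q S, dist_comm P S, dist_comm R S]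
  · unfold gp at h'
    refine le_trans ?_ (add_le_add_left (le_max_right _ _) _)
    linarith [dist_comm Q S, dist_comm P S, dist_comm R S]

/-- Geodesic from `x` to `y`, parametrized by arclength on `[0, dist x y]`. -/
def IsGeo (f : ℝ → X) (x y : X) : Prop :=
  f 0 = x ∧ f (dist x y) = y ∧
    ∀ s ∈ Set.Icc (0 : ℝ) (dist x y), ∀ t ∈ Set.Icc (0 : ℝ) (dist x y),
      dist (f s) (f t) = |s - t|

lemma IsGeo.dist_left {f : ℝ → X} {x y : X} (hf : IsGeo f x y)
    {t : ℝ} (ht : t ∈ Set.Icc (0:ℝ) (dist x y)) : dist x (f t) = t := by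
  obtain ⟨h0, hd, hiso⟩ := hf
  have := hiso 0 ⟨le_refl 0, dist_nonneg⟩ t ht
  rw [h0] at this
  rw [this, abs_of_nonpos (by linarith [ht.1])]
  linarith [ht.1]

lemma IsGeo.dist_right {f : ℝ → X} {x y : X} (hf : IsGeo f x y)
    {t : ℝ} (ht : t ∈ Set.Icc (0:ℝ) (dist x y)) : dist y (f t) = dist x y - t := by
  obtain ⟨h0, hd, hiso⟩ := hf
  have := hiso (dist x y) ⟨dist_nonneg, le_refl _⟩ t ht
  rw [hd] at this
  rw [this, abs_of_nonneg (by linarith [ht.2])]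

lemma gp_geo_zero {f : ℝ → X} {x y : X} (hf : IsGeo f x y)
    {t : ℝ} (ht : t ∈ Set.Icc (0:ℝ) (dist x y)) : gp (f t) x y = 0 := by
  unfold gp
  rw [hf.dist_left ht, hf.dist_right ht]
  ring

/-- Thinness: any point on a geodesic from `x` to `y` has small Gromov product
with any `z` at one of the two endpoints. -/
lemma geo_thin (H : ∀ w x y z : X, min (gp w x y) (gp w y z) - δ ≤ gp w x z)
    {f : ℝ → X} {x y : X} (hf : IsGeo f x y)
    {t : ℝ} (ht : t ∈ Set.Icc (0:ℝ) (dist x y)) (z : X) :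
    min (gp (f t) x z) (gp (f t) y z) ≤ δ := by
  have h := H (f t) x z y
  rw [gp_geo_zero hf ht] at h
  rw [gp_comm (f t) y z]
  rcases le_total (gp (f t) x z) (gp (f t) z y) with h' | h'
  · rw [min_eq_left h'] at h ⊢
    linarith
  · rw [min_eq_right h'] at h ⊢
    linarith
/-- If `p` has small Gromov product `(x|z)_p`, then `p` is near the geodesic. -/
lemma near_geo (hδ : 0 ≤ δ) (H : ∀ w x y z : X, min (gp w x y) (gp w y z) - δ ≤ gp w x z)
    {f : ℝ → X} {x z : X} (hf : IsGeo f x z) (p : X) (hp : gp p x z ≤ δ) :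
    ∃ t ∈ Set.Icc (0:ℝ) (dist x z), dist p (f t) ≤ 4 * δ := by
  have hpd : dist z p ≤ dist x z - dist x p + 2 * δ := by
    unfold gp at hp; linarith [dist_comm x p, dist_comm z p]
  rcases le_total (dist x p) (dist x z) with hc | hc
  · refine ⟨dist x p, ⟨dist_nonneg, hc⟩, ?_⟩
    set u := dist x p with hu
    have htm : u ∈ Set.Icc (0:ℝ) (dist x z) := ⟨dist_nonneg, hc⟩
    have hq1 : dist x (f u) = u := hf.dist_left htm
    have hq2 : dist z (f u) = dist x z - u := hf.dist_right htm
    have hthin := geo_thin δ H hf htm p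
    have e1 : gp (f u) x p = dist p (f u) / 2 := by
      unfold gp; rw [hq1, ← hu]; ring
    have e2 : dist p (f u) / 2 - δ ≤ gp (f u) z p := by
      unfold gp
      rw [hq2]
      linarith
    rcases min_le_iff.mp hthin with h' | h'
    · rw [e1] at h'; linarith
    · linarith
  · refine ⟨dist x z, ⟨dist_nonneg, le_refl _⟩, ?_⟩
    have : f (dist x z) = z := hf.2.1
    rw [this, dist_comm p z]
    linarith

lemma min_step (a c : ℝ) (hc : 0 ≤ c) : |min a c - min (a+1) c| ≤ 1 := by
  rcases le_total c a with h | h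
  · rw [min_eq_right h, min_eq_right (by linarith)]
    simp
  · rw [min_eq_left h]
    rcases le_total c (a+1) with h2 | h2
    · rw [min_eq_right h2]
      rw [abs_of_nonpos (by linarith)]
      linarith
    · rw [min_eq_left h2]
      simp
/-- Divergence: a point on a geodesic between the ends of a chain with `m ≤ 2^k`
steps of size at most `D` is within `4δk + D` of some chain point. -/
lemma divergence (hδ : 0 ≤ δ) (H : ∀ w x y z : X, min (gp w x y) (gp w y z) - δ ≤ gp w x z)
    (hgeo : ∀ x y : X, ∃ f : ℝ → X, IsGeo f x y) {D : ℝ} (hD : 0 ≤ D) :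
    ∀ k : ℕ, ∀ m : ℕ, m ≤ 2 ^ k → ∀ z : ℕ → X,
      (∀ i < m, dist (z i) (z (i + 1)) ≤ D) → ∀ f : ℝ → X, IsGeo f (z 0) (z m) →
      ∀ t ∈ Set.Icc (0:ℝ) (dist (z 0) (z m)),
        ∃ i ≤ m, dist (f t) (z i) ≤ 4 * δ * k + D := by
  intro k
  induction k with
  | zero =>
    intro m hm z hz f hf t ht
    interval_cases m
    · refine ⟨0, le_refl _, ?_⟩
      have h0 : dist (z 0) (z 0) = 0 := dist_self _
      have ht' : t = 0 := le_antisymm (h0 ▸ ht.2) ht.1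
      rw [ht', hf.1]
      simpa using hD
    · refine ⟨0, by norm_num, ?_⟩
      have h1 : dist (f t) (z 0) = t := by rw [dist_comm]; exact hf.dist_left ht
      have := hz 0 (by norm_num)
      simp only [Nat.cast_zero, mul_zero, zero_add]
      calc dist (f t) (z 0) = t := h1
        _ ≤ dist (z 0) (z 1) := ht.2
        _ ≤ D := this
  | succ k ih =>
    intro m hm z hz f hf t ht
    rcases le_or_gt m (2 ^ k) with hm' | hm'
    · obtain ⟨i, hi, hd⟩ := ih m hm' z hz f hf t ht
      exact ⟨i, hi, le_trans hd (by push_cast; nlinarith)⟩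
    · set j := m - 2 ^ k with hj
      have hj1 : 1 ≤ j := by omega
      have hjm : j ≤ m := by omega
      have hjk : j ≤ 2 ^ k := by
        have : (2:ℕ) ^ (k+1) = 2 ^ k + 2 ^ k := by ring
        omega
      have hmj : m - j = 2 ^ k := by omega
      have hthin := geo_thin δ H hf ht (z j)
      rcases min_le_iff.mp hthin with h' | h'
      · -- close to geodesic [z 0, z j]
        obtain ⟨f', hf'⟩ := hgeo (z 0) (z j)
        have h'' : gp (f t) (z 0) (z j) ≤ δ := h'
        obtain ⟨s, hs, hps⟩ := near_geo δ hδ H hf' (f t) h''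
        obtain ⟨i, hi, hd⟩ := ih j hjk z (fun i hi => hz i (lt_of_lt_of_le hi hjm)) f' hf' s hs
        refine ⟨i, le_trans hi hjm, ?_⟩
        calc dist (f t) (z i) ≤ dist (f t) (f' s) + dist (f' s) (z i) := dist_triangle _ _ _
          _ ≤ 4 * δ + (4 * δ * k + D) := add_le_add hps hd
          _ ≤ 4 * δ * (k + 1 : ℕ) + D := by push_cast; nlinarith
      · -- close to geodesic [z m, z j]; use the reversed chain
        set w : ℕ → X := fun i => z (m - i) with hw
        obtain ⟨f', hf'w⟩ := hgeo (w 0) (w (m - j))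
        have hw0 : w 0 = z m := by simp [hw]
        have hwmj : w (m - j) = z j := by simp [hw]; congr 1; omega
        have h'' : gp (f t) (w 0) (w (m - j)) ≤ δ := by rw [hw0, hwmj]; exact h'
        obtain ⟨s, hs, hps⟩ := near_geo δ hδ H hf'w (f t) h''
        have hwsteps : ∀ i < m - j, dist (w i) (w (i + 1)) ≤ D := by
          intro i hi
          have h1 : m - i = (m - i - 1) + 1 := by omega
          have h2 : m - (i+1) = m - i - 1 := by omega
          simp only [hw]
          rw [h2, dist_comm]
          have h3 := hz (m - i - 1) (by omega)
          rwa [← h1] at h3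
        obtain ⟨i, hi, hd⟩ := ih (m - j) (le_of_eq hmj) w hwsteps f' hf'w s hs
        refine ⟨m - i, by omega, ?_⟩
        have : w i = z (m - i) := rfl
        calc dist (f t) (z (m - i)) ≤ dist (f t) (f' s) + dist (f' s) (z (m - i)) :=
              dist_triangle _ _ _
          _ ≤ 4 * δ + (4 * δ * k + D) := add_le_add hps (this ▸ hd)
          _ ≤ 4 * δ * (k + 1 : ℕ) + D := by push_cast; nlinarith
/-- Concatenation of chains. -/
lemma chain_append {m₁ m₂ : ℕ} {σ₁ σ₂ : ℕ → X} {D : ℝ}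
    (h1 : ∀ i < m₁, dist (σ₁ i) (σ₁ (i + 1)) ≤ D)
    (h2 : ∀ i < m₂, dist (σ₂ i) (σ₂ (i + 1)) ≤ D)
    (hj : σ₁ m₁ = σ₂ 0) :
    ∃ σ : ℕ → X, σ 0 = σ₁ 0 ∧ σ (m₁ + m₂) = σ₂ m₂ ∧
      (∀ i < m₁ + m₂, dist (σ i) (σ (i + 1)) ≤ D) ∧
      (∀ P : X → Prop, (∀ j ≤ m₁, P (σ₁ j)) → (∀ j ≤ m₂, P (σ₂ j)) →
        ∀ j ≤ m₁ + m₂, P (σ j)) := by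
  refine ⟨fun j => if j < m₁ then σ₁ j else σ₂ (j - m₁), ?_, ?_, ?_, ?_⟩
  · rcases Nat.eq_zero_or_pos m₁ with h | h
    · simp [h, ← hj]
    · simp [h]
  · have : ¬ (m₁ + m₂ < m₁) := by omega
    simp only [this, if_false]
    congr 1
    omega
  · intro i hi
    rcases lt_trichotomy (i + 1) m₁ with h | h | h
    · simp only [h, if_pos (by omega : i < m₁)]
      exact h1 i (by omega)
    · simp only [if_pos (by omega : i < m₁), if_neg (by omega : ¬ i + 1 < m₁)]
      have : i + 1 - m₁ = 0 := by omega
      rw [this, ← hj, ← h]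
      exact h1 i (by omega)
    · simp only [if_neg (by omega : ¬ i < m₁), if_neg (by omega : ¬ i + 1 < m₁)]
      have e : i + 1 - m₁ = (i - m₁) + 1 := by omega
      rw [e]
      exact h2 (i - m₁) (by omega)
  · intro P hP1 hP2 j hjle
    by_cases h : j < m₁
    · simpa [h] using hP1 j (by omega)
    · simpa [h] using hP2 (j - m₁) (by omega)

/-- Sampling a geodesic into a unit-step chain. -/
lemma geo_sample {f : ℝ → X} {x y : X} (hf : IsGeo f x y) (m₁ : ℕ)
    (hm₁ : dist x y ≤ m₁) :
    ∃ σ : ℕ → X, σ 0 = x ∧ σ m₁ = y ∧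
      (∀ i < m₁, dist (σ i) (σ (i + 1)) ≤ 1) ∧
      (∀ j ≤ m₁, dist x (σ j) ≤ dist x y) ∧
      (∀ j ≤ m₁, dist y (σ j) ≤ dist x y) := by
  refine ⟨fun j => f (min (j : ℝ) (dist x y)), ?_, ?_, ?_, ?_, ?_⟩
  · simp only [Nat.cast_zero]
    rw [min_eq_left dist_nonneg, hf.1]
  · show f (min (m₁ : ℝ) (dist x y)) = y
    rw [min_eq_right hm₁, hf.2.1]
  · intro i hi
    have hmem : ∀ j : ℕ, min (j : ℝ) (dist x y) ∈ Set.Icc (0:ℝ) (dist x y) :=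
      fun j => ⟨le_min (Nat.cast_nonneg _) dist_nonneg, min_le_right _ _⟩
    rw [hf.2.2 _ (hmem i) _ (hmem (i+1))]
    have := min_step (i : ℝ) (dist x y) dist_nonneg
    push_cast
    convert this using 2
  · intro j hjle
    have hmem : min (j : ℝ) (dist x y) ∈ Set.Icc (0:ℝ) (dist x y) :=
      ⟨le_min (Nat.cast_nonneg _) dist_nonneg, min_le_right _ _⟩
    rw [hf.dist_left hmem]
    exact min_le_right _ _
  · intro j hjle
    have hmem : min (j : ℝ) (dist x y) ∈ Set.Icc (0:ℝ) (dist x y) :=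
      ⟨le_min (Nat.cast_nonneg _) dist_nonneg, min_le_right _ _⟩
    rw [hf.dist_right hmem]
    have := hmem.1
    linarith [min_le_right (j : ℝ) (dist x y)]

/-- `k ≤ 3 √m` for the minimal `k` with `m ≤ 2 ^ k`. -/
lemma exists_pow_bound : ∀ m : ℕ, 1 ≤ m →
    ∃ k : ℕ, m ≤ 2 ^ k ∧ (k : ℝ) ≤ 3 * Real.sqrt m := by
  have sq_le : ∀ j : ℕ, j ^ 2 ≤ 4 * 2 ^ j := by
    intro j
    induction j with
    | zero => norm_num
    | succ j ih =>
      rcases le_or_gt j 2 with h | h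
      · interval_cases j <;> norm_num
      · have : (j + 1) ^ 2 ≤ 2 * j ^ 2 := by nlinarith
        calc (j+1)^2 ≤ 2 * j^2 := this
          _ ≤ 2 * (4 * 2 ^ j) := by omega
          _ = 4 * 2 ^ (j+1) := by ring
  intro m hm
  refine ⟨Nat.clog 2 m, Nat.le_pow_clog (by norm_num) m, ?_⟩
  set k := Nat.clog 2 m with hk
  rcases Nat.eq_zero_or_pos k with h | h
  · rw [h]
    simp only [Nat.cast_zero]
    positivity
  · have hm2 : 2 ≤ m := by
      rcases Nat.lt_or_ge m 2 with h2 | h2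
      · exfalso
        have hm1 : m = 1 := by omega
        rw [hm1, Nat.clog_one_right] at hk
        omega
      · exact h2
    have hlt : 2 ^ (k - 1) < m := Nat.pow_pred_clog_lt_self (by norm_num) hm2
    -- k^2 ≤ 4 * 2^k = 8 * 2^(k-1) < 8 m  so k ≤ 3 √m
    have h1 : (k:ℝ) ^ 2 ≤ 8 * m := by
      have e1 : (k:ℝ)^2 ≤ 4 * 2 ^ k := by exact_mod_cast sq_le k
      have e2 : (2:ℝ) ^ k = 2 * 2 ^ (k - 1) := by
        rw [← pow_succ']
        congr 1
        omega
      have e3 : (2:ℝ) ^ (k-1) ≤ m := by exact_mod_cast hlt.le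
      nlinarith
    have hmpos : (0:ℝ) < m := by exact_mod_cast hm
    have h2 : (k:ℝ) ≤ Real.sqrt (8 * m) := by
      rw [← Real.sqrt_sq (Nat.cast_nonneg k)]
      exact Real.sqrt_le_sqrt h1
    calc (k:ℝ) ≤ Real.sqrt (8 * m) := h2
      _ = Real.sqrt 8 * Real.sqrt m := Real.sqrt_mul (by norm_num) _
      _ ≤ 3 * Real.sqrt m := by
        have : Real.sqrt 8 ≤ 3 := by
          rw [show (3:ℝ) = Real.sqrt 9 by rw [show (9:ℝ) = 3^2 by norm_num, Real.sqrt_sq]; norm_num]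
          exact Real.sqrt_le_sqrt (by norm_num)
        nlinarith [Real.sqrt_nonneg (m:ℝ)]
/-- A monotone chain between two indices of a sequence. -/
lemma chain_mid {n : ℕ} (y : ℕ → X) {D : ℝ}
    (hstep : ∀ i < n, dist (y i) (y (i + 1)) ≤ D)
    {ia ib : ℕ} (hia : ia ≤ n) (hib : ib ≤ n) :
    ∃ (mid : ℕ → X) (e : ℕ), ((e:ℝ) = |(ia:ℝ) - ib|) ∧ mid 0 = y ia ∧ mid e = y ib ∧
      (∀ i < e, dist (mid i) (mid (i + 1)) ≤ D) ∧
      (∀ j ≤ e, ∃ i ≤ n, mid j = y i) := by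
  rcases le_total ia ib with h | h
  · refine ⟨fun j => y (ia + j), ib - ia, ?_, by simp, ?_, ?_, ?_⟩
    · rw [abs_of_nonpos (sub_nonpos.mpr (Nat.cast_le.mpr h)), Nat.cast_sub h]
      try ring
    · show y (ia + (ib - ia)) = y ib
      have h4 : ia + (ib - ia) = ib := by omega
      rw [h4]
    · intro i hi
      show dist (y (ia + i)) (y (ia + (i+1))) ≤ D
      have h2 : ia + (i+1) = (ia + i) + 1 := by omega
      rw [h2]
      exact hstep (ia + i) (by omega)
    · intro j hj
      exact ⟨ia + j, by omega, rfl⟩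
  · refine ⟨fun j => y (ia - j), ia - ib, ?_, by simp, ?_, ?_, ?_⟩
    · rw [abs_of_nonneg (sub_nonneg.mpr (Nat.cast_le.mpr h)), Nat.cast_sub h]
      try ring
    · show y (ia - (ia - ib)) = y ib
      have h4 : ia - (ia - ib) = ib := by omega
      rw [h4]
    · intro i hi
      show dist (y (ia - i)) (y (ia - (i+1))) ≤ D
      have h1 : ia - i = (ia - i - 1) + 1 := by omega
      have h2 : ia - (i+1) = ia - i - 1 := by omega
      rw [h2, dist_comm]
      have h3 := hstep (ia - i - 1) (by omega)
      rwa [← h1] at h3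
    · intro j hj
      exact ⟨ia - j, by omega, rfl⟩
/-- Morse lemma: a geodesic between endpoints of a quasi-geodesic chain stays
near the chain. -/
lemma morse (hδ : 0 ≤ δ) (H : ∀ w x y z : X, min (gp w x y) (gp w y z) - δ ≤ gp w x z)
    (hgeo : ∀ x y : X, ∃ f : ℝ → X, IsGeo f x y)
    {K₀ C₁ : ℝ} (hK : 1 ≤ K₀) (hC : 0 ≤ C₁) (n : ℕ) (y : ℕ → X)
    (hlow : ∀ i ≤ n, ∀ j ≤ n, |(i:ℝ) - (j:ℝ)| / K₀ - C₁ ≤ dist (y i) (y j))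
    (hup : ∀ i ≤ n, ∀ j ≤ n, dist (y i) (y j) ≤ K₀ * |(i:ℝ) - (j:ℝ)| + C₁)
    {f : ℝ → X} (hf : IsGeo f (y 0) (y n)) :
    ∀ t ∈ Set.Icc (0:ℝ) (dist (y 0) (y n)), ∃ i ≤ n,
      dist (f t) (y i) ≤ (36*δ*K₀*(C₁+1) + 36*δ*K₀ + (K₀ + C₁) + 1)^2 := by
  set A := 36*δ*K₀ with hA
  set D := K₀ + C₁ with hD
  set B := A*(C₁+1) + A + D + 1 with hB
  have hA0 : 0 ≤ A := by rw [hA]; positivity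
  have hD1 : 1 ≤ D := by rw [hD]; linarith
  have hD0 : (0:ℝ) ≤ D := by linarith
  have hB1 : 1 ≤ B := by
    rw [hB]
    have : 0 ≤ A*(C₁+1) := mul_nonneg hA0 (by linarith)
    linarith
  have hB0 : 0 ≤ B := by linarith
  clear_value A D B
  set L := dist (y 0) (y n) with hL
  have hL0 : 0 ≤ L := dist_nonneg
  set F : Set X := y '' (Set.Iic n) with hF
  have hFfin : F.Finite := (Set.finite_Iic n).image y
  have hFne : F.Nonempty := ⟨y 0, ⟨0, Set.mem_Iic.mpr (Nat.zero_le n), rfl⟩⟩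
  have hFc : IsCompact F := hFfin.isCompact
  have hfc : ContinuousOn f (Set.Icc 0 L) := by
    intro s hs
    rw [Metric.continuousWithinAt_iff]
    intro ε hε
    exact ⟨ε, hε, fun u hu hd => by
      rw [hf.2.2 u hu s hs, ← Real.dist_eq]; exact hd⟩
  have hgc : ContinuousOn (fun t => Metric.infDist (f t) F) (Set.Icc 0 L) :=
    (Metric.continuous_infDist_pt F).comp_continuousOn hfc
  obtain ⟨ts, htsmem, htsmax⟩ :=
    isCompact_Icc.exists_isMaxOn (Set.nonempty_Icc.mpr hL0) hgc
  set R := Metric.infDist (f ts) F with hRdef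
  have hR0 : 0 ≤ R := Metric.infDist_nonneg
  have hfarpts : ∀ i ≤ n, R ≤ dist (f ts) (y i) := fun i hi =>
    Metric.infDist_le_dist_of_mem ⟨i, Set.mem_Iic.mpr hi, rfl⟩
  have htsmax' : ∀ t ∈ Set.Icc (0:ℝ) L, Metric.infDist (f t) F ≤ R := by
    intro t ht
    rw [hRdef]
    exact htsmax ht
  clear_value R
  suffices hkey : R ≤ B^2 by
    intro t ht
    have h1 : Metric.infDist (f t) F ≤ R := htsmax' t ht
    obtain ⟨p, hpF, hpd⟩ := hFc.exists_infDist_eq_dist hFne (f t)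
    obtain ⟨i, hi, rfl⟩ := hpF
    exact ⟨i, hi, by rw [← hpd]; exact h1.trans hkey⟩
  by_contra hcon
  push_neg at hcon
  have hR1 : 1 ≤ R := by
    have h1 : (1:ℝ)*1 ≤ B*B := mul_le_mul hB1 hB1 (by norm_num) hB0
    linarith only [hcon, h1]
  set a := max 0 (ts - 2*R) with ha
  set b := min L (ts + 2*R) with hb
  have hts0 : 0 ≤ ts := htsmem.1
  have htsL : ts ≤ L := htsmem.2
  have ha0 : 0 ≤ a := le_max_left _ _
  have hats : a ≤ ts := max_le hts0 (by linarith)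
  have htsb : ts ≤ b := le_min htsL (by linarith)
  have hbL : b ≤ L := min_le_left _ _
  have hamem : a ∈ Set.Icc 0 L := ⟨ha0, hats.trans htsL⟩
  have hbmem : b ∈ Set.Icc 0 L := ⟨le_trans ha0 (hats.trans htsb), hbL⟩
  have hba4 : b - a ≤ 4*R := by
    have h1 : ts - 2*R ≤ a := le_max_right _ _
    have h2 : b ≤ ts + 2*R := min_le_right _ _
    linarith
  have hdab : dist (f a) (f b) = b - a := by
    rw [hf.2.2 a hamem b hbmem, abs_of_nonpos (by linarith : a - b ≤ 0)]
    ring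
  have hdta : dist (f ts) (f a) = ts - a := by
    rw [hf.2.2 ts htsmem a hamem, abs_of_nonneg (by linarith)]
  have hdtb : dist (f ts) (f b) = b - ts := by
    rw [hf.2.2 ts htsmem b hbmem, abs_of_nonpos (by linarith : ts - b ≤ 0)]
    ring
  -- choice of the entry point
  have hiaex : ∃ ia ≤ n, dist (f a) (y ia) ≤ R ∧
      (∀ u : X, dist (f a) u ≤ dist (f a) (y ia) → R ≤ dist (f ts) u) := by
    by_cases haz : a = 0
    · refine ⟨0, Nat.zero_le n, ?_, ?_⟩
      · rw [haz, hf.1, dist_self]; exact hR0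
      · intro u hu
        rw [haz, hf.1, dist_self] at hu
        have hu0 : dist (y 0) u = 0 := le_antisymm hu dist_nonneg
        have : u = y 0 := by rw [dist_comm] at hu0; exact dist_eq_zero.mp hu0
        rw [this]
        exact hfarpts 0 (Nat.zero_le n)
    · have haeq : a = ts - 2*R := by
        rcases max_cases 0 (ts - 2*R) with ⟨h1, h2⟩ | ⟨h1, h2⟩
        · exact absurd (ha.trans h1) haz
        · exact ha.trans h1
      have h1 : Metric.infDist (f a) F ≤ R := htsmax' a hamem
      obtain ⟨p, hpF, hpd⟩ := hFc.exists_infDist_eq_dist hFne (f a)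
      obtain ⟨ia, hian, rfl⟩ := hpF
      refine ⟨ia, hian, by rw [← hpd]; exact h1, ?_⟩
      intro u hu
      have h2 : dist (f a) u ≤ R := le_trans hu (by rw [← hpd]; exact h1)
      have h3 := dist_triangle (f ts) u (f a)
      rw [dist_comm u (f a)] at h3
      rw [hdta] at h3
      have h4 : ts - a = 2*R := by rw [haeq]; ring
      linarith
  have hibex : ∃ ib ≤ n, dist (y ib) (f b) ≤ R ∧
      (∀ u : X, dist (f b) u ≤ dist (y ib) (f b) → R ≤ dist (f ts) u) := by
    by_cases hbz : b = L
    · refine ⟨n, le_refl n, ?_, ?_⟩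
      · rw [hbz, hf.2.1, dist_self]; exact hR0
      · intro u hu
        rw [hbz, hf.2.1, dist_self] at hu
        have hu0 : dist (y n) u = 0 := le_antisymm hu dist_nonneg
        have : u = y n := by rw [dist_comm] at hu0; exact dist_eq_zero.mp hu0
        rw [this]
        exact hfarpts n (le_refl n)
    · have hbeq : b = ts + 2*R := by
        rcases min_cases L (ts + 2*R) with ⟨h1, h2⟩ | ⟨h1, h2⟩
        · exact absurd (hb.trans h1) hbz
        · exact hb.trans h1
      have h1 : Metric.infDist (f b) F ≤ R := htsmax' b hbmem
      obtain ⟨p, hpF, hpd⟩ := hFc.exists_infDist_eq_dist hFne (f b)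
      obtain ⟨ib, hibn, rfl⟩ := hpF
      refine ⟨ib, hibn, by rw [dist_comm, ← hpd]; exact h1, ?_⟩
      intro u hu
      rw [dist_comm (y ib) (f b), ← hpd] at hu
      have h2 : dist (f b) u ≤ R := le_trans hu h1
      have h3 := dist_triangle (f ts) u (f b)
      rw [dist_comm u (f b)] at h3
      rw [hdtb] at h3
      have h4 : b - ts = 2*R := by rw [hbeq]; ring
      linarith
  obtain ⟨ia, hian, hiaR, hfa⟩ := hiaex
  obtain ⟨ib, hibn, hibR, hfb⟩ := hibex
  -- unit-step bound along the chain
  have hstepy : ∀ i < n, dist (y i) (y (i+1)) ≤ D := by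
    intro i hi
    have h1 := hup i (le_of_lt hi) (i+1) (by omega)
    have e1 : |(i:ℝ) - ((i+1:ℕ):ℝ)| = 1 := by
      push_cast
      rw [show (i:ℝ) - ((i:ℝ)+1) = -1 by ring]
      norm_num
    rw [e1] at h1
    rw [hD]
    linarith
  set m₁ := Nat.ceil R with hm₁def
  have hm₁R : R ≤ (m₁:ℝ) := Nat.le_ceil R
  have hm₁1 : 1 ≤ m₁ := Nat.one_le_ceil_iff.mpr (by linarith)
  have hm₁le : (m₁:ℝ) ≤ R + 1 := (Nat.ceil_lt_add_one hR0).le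
  clear_value m₁
  obtain ⟨ga, hga⟩ := hgeo (f a) (y ia)
  obtain ⟨σa, hσa0, hσa1, hσas, hσad, _⟩ := geo_sample hga m₁ (le_trans hiaR hm₁R)
  obtain ⟨gb, hgb⟩ := hgeo (y ib) (f b)
  obtain ⟨σb, hσb0, hσb1, hσbs, _, hσbd⟩ := geo_sample hgb m₁ (le_trans hibR hm₁R)
  obtain ⟨mid, e, hecast, hmid0, hmide, hmids, hmidpts⟩ := chain_mid y hstepy hian hibn
  have hσas' : ∀ i < m₁, dist (σa i) (σa (i+1)) ≤ D := fun i hi =>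
    le_trans (hσas i hi) hD1
  have hσbs' : ∀ i < m₁, dist (σb i) (σb (i+1)) ≤ D := fun i hi =>
    le_trans (hσbs i hi) hD1
  obtain ⟨τ, hτ0, hτe, hτs, hτP⟩ := chain_append hσas' hmids (by rw [hσa1, hmid0])
  obtain ⟨σ, hσ0, hσe, hσs, hσP⟩ := chain_append hτs hσbs' (by rw [hτe, hmide, hσb0])
  set m := m₁ + e + m₁ with hmdef
  clear_value m
  have hσ0' : σ 0 = f a := by rw [hσ0, hτ0, hσa0]
  have hσe' : σ m = f b := by rw [hσe, hσb1]
  have hfarσ : ∀ j ≤ m, R ≤ dist (f ts) (σ j) := by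
    apply hσP (fun u => R ≤ dist (f ts) u)
    · apply hτP (fun u => R ≤ dist (f ts) u)
      · intro j hj
        exact hfa _ (hσad j hj)
      · intro j hj
        obtain ⟨i, hi, hji⟩ := hmidpts j hj
        rw [hji]
        exact hfarpts i hi
    · intro j hj
      exact hfb _ (hσbd j hj)
  -- the restricted geodesic
  set fr : ℝ → X := fun s => f (a + s) with hfr
  have hfres : IsGeo fr (f a) (f b) := by
    refine ⟨by simp [hfr], ?_, ?_⟩
    · rw [hdab]
      show f (a + (b - a)) = f b
      rw [show a + (b - a) = b by ring]
    · intro s hs t ht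
      rw [hdab] at hs ht
      have hsm : a + s ∈ Set.Icc 0 L := ⟨by linarith [hs.1], by linarith [hs.2]⟩
      have htm : a + t ∈ Set.Icc 0 L := ⟨by linarith [ht.1], by linarith [ht.2]⟩
      show dist (f (a+s)) (f (a+t)) = |s - t|
      rw [hf.2.2 _ hsm _ htm]
      rw [show (a+s) - (a+t) = s - t by ring]
  have htsa : ts - a ∈ Set.Icc 0 (dist (σ 0) (σ m)) := by
    rw [hσ0', hσe', hdab]
    exact ⟨by linarith, by linarith⟩
  have hfrts : fr (ts - a) = f ts := by
    show f (a + (ts - a)) = f ts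
    rw [show a + (ts - a) = ts by ring]
  have hm1m : 1 ≤ m := by omega
  obtain ⟨k, hmk, hk3⟩ := exists_pow_bound m hm1m
  obtain ⟨i, him, hidist⟩ := divergence δ hδ H hgeo hD0 k m hmk σ hσs fr
    (by rw [hσ0', hσe']; exact hfres) (ts - a) htsa
  rw [hfrts] at hidist
  have hRk : R ≤ 4*δ*k + D := le_trans (hfarσ i him) hidist
  -- numeric estimates
  have he6 : (e:ℝ) ≤ K₀ * (6*R + C₁) := by
    have hK0 : (0:ℝ) < K₀ := by linarith
    have h1 := hlow ia hian ib hibn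
    have h2 : |(ia:ℝ) - (ib:ℝ)| ≤ (dist (y ia) (y ib) + C₁) * K₀ :=
      (div_le_iff₀ hK0).mp (by linarith)
    have t1 := dist_triangle (y ia) (f a) (y ib)
    have t2 := dist_triangle (f a) (f b) (y ib)
    have c1 := dist_comm (f a) (y ia)
    have c2 := dist_comm (f b) (y ib)
    rw [hdab] at t2
    have h3 : dist (y ia) (y ib) ≤ 6*R := by
      have := hiaR
      have := hibR
      linarith
    rw [hecast]
    calc |(ia:ℝ) - (ib:ℝ)| ≤ (dist (y ia) (y ib) + C₁) * K₀ := h2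
      _ ≤ (6*R + C₁) * K₀ := mul_le_mul_of_nonneg_right (by linarith) (le_of_lt hK0)
      _ = K₀*(6*R + C₁) := by ring
  have hmbound : (m:ℝ) ≤ 8*K₀*(R + C₁ + 1) := by
    have hm' : (m:ℝ) = (m₁:ℝ) + (e:ℝ) + (m₁:ℝ) := by rw [hmdef]; push_cast; ring
    rw [hm']
    have p1 : (0:ℝ) ≤ R*(K₀-1) := mul_nonneg hR0 (by linarith)
    have p2 : (0:ℝ) ≤ K₀*C₁ := mul_nonneg (by linarith) hC
    linarith only [he6, hm₁le, hK, p1, p2, hR0, hC]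
  have hmpos : (0:ℝ) < (m:ℝ) := by exact_mod_cast hm1m
  have hsqK : Real.sqrt (8*K₀) ≤ 3*K₀ := by
    rw [show (3*K₀ : ℝ) = Real.sqrt ((3*K₀)^2) from (Real.sqrt_sq (by positivity)).symm]
    refine Real.sqrt_le_sqrt ?_
    have h1 : K₀*1 ≤ K₀*K₀ := mul_le_mul_of_nonneg_left hK (by linarith)
    have h2 := sq_nonneg K₀
    linarith only [h1, h2, hK]
  have hsqR : Real.sqrt (R + (C₁+1)) ≤ Real.sqrt R + (C₁+1) := by
    rw [show (Real.sqrt R + (C₁+1) : ℝ) = Real.sqrt ((Real.sqrt R + (C₁+1))^2) from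
      (Real.sqrt_sq (by positivity)).symm]
    apply Real.sqrt_le_sqrt
    have hsr : Real.sqrt R * Real.sqrt R = R := Real.mul_self_sqrt hR0
    have cross : (0:ℝ) ≤ Real.sqrt R * (C₁+1) := mul_nonneg (Real.sqrt_nonneg R) (by linarith)
    have hcc : (C₁+1)*1 ≤ (C₁+1)*(C₁+1) := mul_le_mul_of_nonneg_left (by linarith) (by linarith)
    linarith only [hsr, cross, hcc]
  have hsqm : Real.sqrt (m:ℝ) ≤ 3*K₀*(Real.sqrt R + (C₁+1)) := by
    calc Real.sqrt (m:ℝ) ≤ Real.sqrt (8*K₀*(R + (C₁+1))) := by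
          apply Real.sqrt_le_sqrt
          linarith [hmbound]
      _ = Real.sqrt (8*K₀) * Real.sqrt (R + (C₁+1)) := by
          rw [← Real.sqrt_mul (by positivity)]
      _ ≤ 3*K₀*(Real.sqrt R + (C₁+1)) :=
          mul_le_mul hsqK hsqR (Real.sqrt_nonneg _) (by positivity)
  have hfinal : R ≤ A*Real.sqrt R + A*(C₁+1) + D := by
    have h4 : (4*δ)*(k:ℝ) ≤ (4*δ)*(3*Real.sqrt (m:ℝ)) :=
      mul_le_mul_of_nonneg_left hk3 (by linarith)
    have h6 : (12*δ)*Real.sqrt (m:ℝ) ≤ (12*δ)*(3*K₀*(Real.sqrt R + (C₁+1))) :=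
      mul_le_mul_of_nonneg_left hsqm (by linarith)
    rw [hA]
    linarith only [hRk, h4, h6]
  have hsB : B < Real.sqrt R := by
    have h1 : Real.sqrt (B^2) < Real.sqrt R := Real.sqrt_lt_sqrt (by positivity) hcon
    rwa [Real.sqrt_sq hB0] at h1
  have hs1 : 1 ≤ Real.sqrt R := by linarith
  have hRsq : Real.sqrt R * Real.sqrt R = R := Real.mul_self_sqrt hR0
  rw [hB] at hsB
  have hq0 : (0:ℝ) ≤ A*(C₁+1) + D + 1 := by
    have : 0 ≤ A*(C₁+1) := mul_nonneg hA0 (by linarith)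
    linarith
  have q1 : (A*(C₁+1) + A + D + 1) * Real.sqrt R < Real.sqrt R * Real.sqrt R :=
    mul_lt_mul_of_pos_right hsB (by linarith)
  have q2 : (A*(C₁+1) + D + 1) * 1 ≤ (A*(C₁+1) + D + 1) * Real.sqrt R :=
    mul_le_mul_of_nonneg_left hs1 hq0
  linarith only [q1, q2, hfinal, hRsq]
/-- Chain of points with small Gromov products and long steps makes progress. -/
lemma chain_progress (hδ : 0 ≤ δ) (H : ∀ w x y z : X, min (gp w x y) (gp w y z) - δ ≤ gp w x z)
    {c : ℝ} (hc : 0 ≤ c) (z : ℕ → X)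
    (hstep : ∀ i : ℕ, 2*c + 2*δ + 1 ≤ dist (z i) (z (i+1)))
    (hprod : ∀ i : ℕ, gp (z (i+1)) (z i) (z (i+2)) ≤ c) :
    ∀ k : ℕ, (k:ℝ) ≤ dist (z 0) (z k) := by
  have key : ∀ k : ℕ, dist (z 0) (z k) + dist (z k) (z (k+1)) - (2*c + 2*δ) ≤
      dist (z 0) (z (k+1)) := by
    intro k
    induction k with
    | zero => simp [dist_self]; linarith [hδ, hc]
    | succ k ih =>
      have hfp := four_point δ H (z 0) (z k) (z (k+1)) (z (k+2))
      have hp := hprod k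
      have hs := hstep k
      have hgp : dist (z k) (z (k+1)) + dist (z (k+1)) (z (k+2)) - 2*c ≤
          dist (z k) (z (k+2)) := by
        have : gp (z (k+1)) (z k) (z (k+2)) =
            (dist (z k) (z (k+1)) + dist (z (k+2)) (z (k+1)) - dist (z k) (z (k+2)))/2 := rfl
        rw [this] at hp
        rw [dist_comm (z (k+2)) (z (k+1))] at hp
        linarith
      rcases max_cases (dist (z 0) (z k) + dist (z (k+1)) (z (k+2)))
        (dist (z 0) (z (k+2)) + dist (z k) (z (k+1))) with ⟨h1, h2⟩ | ⟨h1, h2⟩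
      · rw [h1] at hfp
        exfalso
        linarith
      · rw [h1] at hfp
        linarith
  intro k
  induction k with
  | zero => simp [dist_self]
  | succ k ih =>
    have h1 := key k
    have h2 := hstep k
    push_cast
    linarith

/-- Discrete intermediate value. -/
lemma discrete_ivt {J : ℝ} (hJ : 0 ≤ J) (N : ℕ) :
    ∀ m' : ℕ, ∀ I : ℕ → ℕ, I 0 ≤ N → N ≤ I m' →
      (∀ j < m', (I (j+1) : ℝ) ≤ I j + J) →
      ∃ j ≤ m', N ≤ I j ∧ (I j : ℝ) ≤ N + J := by
  intro m'
  induction m' with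
  | zero =>
    intro I h0 hN _
    refine ⟨0, le_refl _, hN, ?_⟩
    have : (I 0 : ℝ) ≤ N := Nat.cast_le.mpr h0
    linarith
  | succ m' ih =>
    intro I h0 hN hsteps
    by_cases h : N ≤ I m'
    · obtain ⟨j, hj, hj1, hj2⟩ := ih I h0 h (fun j hj => hsteps j (by omega))
      exact ⟨j, by omega, hj1, hj2⟩
    · push_neg at h
      refine ⟨m'+1, le_refl _, hN, ?_⟩
      have h1 := hsteps m' (by omega)
      have h2 : (I m' : ℝ) ≤ (N:ℝ) := Nat.cast_le.mpr h.le
      linarith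
/-- The Morse constant. -/
noncomputable def morseR (δ K₀ C₁ : ℝ) : ℝ :=
  (36*δ*K₀*(C₁+1) + 36*δ*K₀ + (K₀ + C₁) + 1)^2

lemma morseR_nonneg (δ K₀ C₁ : ℝ) : 0 ≤ morseR δ K₀ C₁ := sq_nonneg _

/-- The Gromov product bound at the midpoint of a quasi-geodesic window. -/
noncomputable def prodC (δ K₀ C₁ : ℝ) : ℝ :=
  K₀*(K₀*(2*morseR δ K₀ C₁ + 1 + C₁)) + C₁ + morseR δ K₀ C₁

lemma mid_gp (hδ : 0 ≤ δ) (H : ∀ w x y z : X, min (gp w x y) (gp w y z) - δ ≤ gp w x z)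
    (hgeo : ∀ x y : X, ∃ f : ℝ → X, IsGeo f x y)
    {K₀ C₁ : ℝ} (hK : 1 ≤ K₀) (hC : 0 ≤ C₁) (N : ℕ) (hN : 1 ≤ N) (y : ℕ → X)
    (hlow : ∀ i ≤ 2*N, ∀ j ≤ 2*N, |(i:ℝ) - (j:ℝ)| / K₀ - C₁ ≤ dist (y i) (y j))
    (hup : ∀ i ≤ 2*N, ∀ j ≤ 2*N, dist (y i) (y j) ≤ K₀ * |(i:ℝ) - (j:ℝ)| + C₁)
    (hL1 : 1 ≤ dist (y 0) (y (2*N))) :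
    gp (y N) (y 0) (y (2*N)) ≤ prodC δ K₀ C₁ := by
  set R₀ := morseR δ K₀ C₁ with hR₀
  have hR₀0 : 0 ≤ R₀ := morseR_nonneg δ K₀ C₁
  have hK0 : (0:ℝ) < K₀ := by linarith
  set J := K₀*(2*R₀ + 1 + C₁) with hJdef
  have hJ0 : 0 ≤ J := by rw [hJdef]; positivity
  obtain ⟨f, hf⟩ := hgeo (y 0) (y (2*N))
  set L := dist (y 0) (y (2*N)) with hL
  have hL0 : 0 ≤ L := dist_nonneg
  have hmorse := morse δ hδ H hgeo hK hC (2*N) y hlow hup hf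
  set m' := Nat.ceil L with hm'
  have hm'1 : 1 ≤ m' := Nat.one_le_ceil_iff.mpr (by linarith)
  have hm'L : L ≤ (m' : ℝ) := Nat.le_ceil L
  set t : ℕ → ℝ := fun j => min (j:ℝ) L with ht
  have htmem : ∀ j : ℕ, t j ∈ Set.Icc (0:ℝ) L :=
    fun j => ⟨le_min (Nat.cast_nonneg _) hL0, min_le_right _ _⟩
  have hchoice : ∀ j : ℕ, ∃ i, i ≤ 2*N ∧ dist (f (t j)) (y i) ≤ R₀ := by
    intro j
    obtain ⟨i, hi, hd⟩ := hmorse (t j) (htmem j)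
    exact ⟨i, hi, hd⟩
  choose I₀ hI₀le hI₀d using hchoice
  set I : ℕ → ℕ := fun j => if j = 0 then 0 else if m' ≤ j then 2*N else I₀ j with hI
  have hIle : ∀ j, I j ≤ 2*N := by
    intro j
    rw [hI]
    by_cases h1 : j = 0
    · simp [h1]
    · by_cases h2 : m' ≤ j <;> simp [h1, h2, hI₀le j]
  have hId : ∀ j, dist (f (t j)) (y (I j)) ≤ R₀ := by
    intro j
    by_cases h1 : j = 0
    · subst h1
      have hI0 : I 0 = 0 := by rw [hI]; simp
      have ht0 : t 0 = 0 := by rw [ht]; simp only [Nat.cast_zero]; exact min_eq_left hL0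
      rw [hI0, ht0, hf.1, dist_self]
      exact hR₀0
    · by_cases h2 : m' ≤ j
      · have hIj : I j = 2*N := by rw [hI]; simp [h1, h2]
        have htj : t j = L := by
          rw [ht]
          simp only
          rw [min_eq_right]
          calc L ≤ (m':ℝ) := hm'L
            _ ≤ (j:ℝ) := Nat.cast_le.mpr h2
        rw [hIj, htj, hf.2.1, dist_self]
        exact hR₀0
      · have hIj : I j = I₀ j := by rw [hI]; simp [h1, h2]
        rw [hIj]
        exact hI₀d j
  have hfstep : ∀ j : ℕ, dist (f (t j)) (f (t (j+1))) ≤ 1 := by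
    intro j
    rw [hf.2.2 _ (htmem j) _ (htmem (j+1))]
    have := min_step (j:ℝ) L hL0
    rw [ht]
    simp only
    push_cast
    convert this using 2
  have hsteps : ∀ j < m', (I (j+1) : ℝ) ≤ I j + J := by
    intro j hj
    have d1 := hId j
    have d2 := hId (j+1)
    have d3 := hfstep j
    have tri1 := dist_triangle (y (I j)) (f (t j)) (y (I (j+1)))
    have tri2 := dist_triangle (f (t j)) (f (t (j+1))) (y (I (j+1)))
    have hdd : dist (y (I j)) (y (I (j+1))) ≤ 2*R₀ + 1 := by
      have c1 := dist_comm (f (t j)) (y (I j))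
      have c2 := dist_comm (f (t (j+1))) (y (I (j+1)))
      linarith
    have hlo := hlow (I j) (hIle j) (I (j+1)) (hIle (j+1))
    have habs : |(I j : ℝ) - (I (j+1) : ℝ)| ≤ K₀ * (2*R₀ + 1 + C₁) := by
      have := (div_le_iff₀ hK0).mp (by linarith : |(I j : ℝ) - (I (j+1):ℝ)|/K₀ ≤ 2*R₀ + 1 + C₁)
      linarith [this]
    have := abs_le.mp habs
    rw [hJdef]
    linarith [this.1]
  have hI0N : I 0 ≤ N := by rw [hI]; simp
  have hIm'N : N ≤ I m' := by
    have hm0 : ¬ m' = 0 := by omega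
    have h2N : I m' = 2*N := by rw [hI]; simp [hm0]
    omega
  obtain ⟨j, hjm', hNle, hleNJ⟩ := discrete_ivt hJ0 N m' I hI0N hIm'N hsteps
  have habsN : |(N:ℝ) - (I j : ℝ)| ≤ J := by
    rw [abs_of_nonpos (by
      have : (N:ℝ) ≤ (I j : ℝ) := Nat.cast_le.mpr hNle
      linarith)]
    linarith
  have h1 : gp (y N) (y 0) (y (2*N)) ≤ gp (f (t j)) (y 0) (y (2*N)) + dist (y N) (f (t j)) :=
    gp_le_add _ _ _ _
  have h2 : gp (f (t j)) (y 0) (y (2*N)) = 0 := gp_geo_zero hf (htmem j)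
  have h3 : dist (y N) (f (t j)) ≤ K₀ * J + C₁ + R₀ := by
    have tri := dist_triangle (y N) (y (I j)) (f (t j))
    have hu := hup N (by omega) (I j) (hIle j)
    have hd := hId j
    have c1 := dist_comm (f (t j)) (y (I j))
    have : K₀ * |(N:ℝ) - (I j :ℝ)| ≤ K₀ * J := mul_le_mul_of_nonneg_left habsN (by linarith)
    linarith
  rw [prodC, ← hR₀]
  have : K₀*(K₀*(2*R₀ + 1 + C₁)) = K₀ * J := by rw [hJdef]
  rw [this]
  linarith
end AStable

/-- Openness of `A`-stability: if the orbit map of `ρ₀` sends a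
family `L` of geodesics of the Cayley graph of `Γ` to `(K₀,C₀)`-quasi-geodesics of a
`δ`-hyperbolic geodesic space `X`, then there exist `K ≥ 1`, `C ≥ 0`, `M ≥ 0`
depending only on `δ`, `K₀`, `C₀` such that every representation `ρ` whose orbit map
is within distance `C₀` of that of `ρ₀` on the ball of radius `M` around the identity
also sends every geodesic of `L` to a `(K,C)`-quasi-geodesic. -/
theorem a_stable_open {Γ : Type*} [Group Γ] [MetricSpace Γ]
    (hinvΓ : ∀ g x y : Γ, dist (g * x) (g * y) = dist x y)
    {X : Type*} [MetricSpace X] [ProperSpace X]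
    (δ : ℝ) (hδ : 0 ≤ δ)
    (hhypX : ∀ w x y z : X,
      min ((dist x w + dist y w - dist x y) / 2) ((dist y w + dist z w - dist y z) / 2) - δ ≤
        (dist x w + dist z w - dist x z) / 2)
    (hgeoX : ∀ x y : X, ∃ f : ℝ → X, f 0 = x ∧ f (dist x y) = y ∧
      ∀ s ∈ Set.Icc (0 : ℝ) (dist x y), ∀ t ∈ Set.Icc (0 : ℝ) (dist x y),
        dist (f s) (f t) = |s - t|) :
    ∀ K₀ C₀ : ℝ, 1 ≤ K₀ → 0 ≤ C₀ →
      ∃ K C M : ℝ, 1 ≤ K ∧ 0 ≤ C ∧ 0 ≤ M ∧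
        ∀ (ρ₀ ρ : Γ →* (X ≃ᵢ X)) (x : X) (L : Set (ℤ → Γ)),
          (∀ l ∈ L, ∀ m n : ℤ, dist (l m) (l n) = |(m : ℝ) - n|) →
          (∀ l ∈ L, ∀ m n : ℤ,
            |(m : ℝ) - n| / K₀ - C₀ ≤ dist (ρ₀ (l m) x) (ρ₀ (l n) x) ∧
              dist (ρ₀ (l m) x) (ρ₀ (l n) x) ≤ K₀ * |(m : ℝ) - n| + C₀) →
          (∀ γ : Γ, dist (1 : Γ) γ ≤ M → dist (ρ γ x) (ρ₀ γ x) ≤ C₀) →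
          ∀ l ∈ L, ∀ m n : ℤ,
            |(m : ℝ) - n| / K - C ≤ dist (ρ (l m) x) (ρ (l n) x) ∧
              dist (ρ (l m) x) (ρ (l n) x) ≤ K * |(m : ℝ) - n| + C := by
  intro K₀ C₀ hK hC₀
  have H : ∀ w x y z : X, min (gp w x y) (gp w y z) - δ ≤ gp w x z := by
    intro w x y z
    have := hhypX w x y z
    simpa [gp] using this
  have hgeo : ∀ x y : X, ∃ f : ℝ → X, IsGeo f x y := by
    intro x y
    obtain ⟨f, h1, h2, h3⟩ := hgeoX x y
    exact ⟨f, h1, h2, h3⟩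
  have hK0 : (0:ℝ) < K₀ := by linarith
  set C₁ : ℝ := 2*C₀ with hC₁def
  have hC : 0 ≤ C₁ := by linarith
  clear_value C₁
  set R₀ := morseR δ K₀ C₁ with hR₀def
  have hR₀0 : 0 ≤ R₀ := morseR_nonneg δ K₀ C₁
  set cP := prodC δ K₀ C₁ with hcPdef
  have hcP0 : 0 ≤ cP := by
    rw [hcPdef, prodC, ← hR₀def]
    have h1 : 0 ≤ K₀*(2*R₀ + 1 + C₁) := mul_nonneg (by linarith) (by linarith)
    have h2 : 0 ≤ K₀*(K₀*(2*R₀ + 1 + C₁)) := mul_nonneg (by linarith) h1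
    linarith
  have hcPC : C₁ ≤ cP := by
    rw [hcPdef, prodC, ← hR₀def]
    have h1 : 0 ≤ K₀*(2*R₀ + 1 + C₁) := mul_nonneg (by linarith) (by linarith)
    have h2 : 0 ≤ K₀*(K₀*(2*R₀ + 1 + C₁)) := mul_nonneg (by linarith) h1
    linarith
  clear_value R₀ cP
  set E : ℝ := 2*cP + 2*δ with hEdef
  have hE0 : 0 ≤ E := by rw [hEdef]; linarith
  have hE2C : 2*C₁ ≤ E := by rw [hEdef]; linarith
  clear_value E
  set N : ℕ := ⌈K₀*(E + 1 + C₁)⌉₊ with hNdef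
  have hNlb : K₀*(E + 1 + C₁) ≤ (N:ℝ) := Nat.le_ceil _
  have hN1 : 1 ≤ N := Nat.one_le_ceil_iff.mpr (by nlinarith)
  clear_value N
  have hN1R : (1:ℝ) ≤ (N:ℝ) := by exact_mod_cast hN1
  have hNK : E + 1 + C₁ ≤ (N:ℝ)/K₀ := by
    rw [le_div_iff₀ hK0]
    linarith [hNlb]
  have hKCN : K₀ + C₁ ≤ (N:ℝ) := by nlinarith [hNlb, hE2C, hK, hC, hE0]
  refine ⟨(N:ℝ), K₀*(N:ℝ) + C₁ + 1, 2*(N:ℝ), hN1R, by positivity, by positivity, ?_⟩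
  intro ρ₀ ρ x L hgeoL hqg hclose l hl
  -- orbit map identities
  have horb : ∀ (ψ : Γ →* (X ≃ᵢ X)) (g h : Γ), dist (ψ g x) (ψ h x) = dist x (ψ (g⁻¹ * h) x) := by
    intro ψ g h
    have e : ψ h = ψ g * ψ (g⁻¹ * h) := by rw [← map_mul]; congr 1; group
    rw [e]
    have e2 : (ψ g * ψ (g⁻¹*h)) x = ψ g (ψ (g⁻¹*h) x) := rfl
    rw [e2]
    exact (ψ g).dist_eq x _
  have hdist1 : ∀ m n : ℤ, dist (1:Γ) ((l m)⁻¹ * l n) = |(m:ℝ) - n| := by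
    intro m n
    have h1 := hinvΓ (l m) 1 ((l m)⁻¹ * l n)
    rw [mul_one, show l m * ((l m)⁻¹ * l n) = l n by group] at h1
    rw [← h1, hgeoL l hl m n]
  -- local estimates for ρ
  have hloc : ∀ m n : ℤ, |(m:ℝ) - n| ≤ 2*(N:ℝ) →
      |(m:ℝ) - n|/K₀ - C₁ ≤ dist (ρ (l m) x) (ρ (l n) x) ∧
        dist (ρ (l m) x) (ρ (l n) x) ≤ K₀*|(m:ℝ) - n| + C₁ := by
    intro m n hmn
    have h1 : dist (ρ (l m) x) (ρ (l n) x) = dist x (ρ ((l m)⁻¹ * l n) x) := horb ρ (l m) (l n)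
    have h0 : dist (ρ₀ (l m) x) (ρ₀ (l n) x) = dist x (ρ₀ ((l m)⁻¹ * l n) x) :=
      horb ρ₀ (l m) (l n)
    have hcl : dist (ρ ((l m)⁻¹ * l n) x) (ρ₀ ((l m)⁻¹ * l n) x) ≤ C₀ :=
      hclose _ (by rw [hdist1 m n]; exact hmn)
    have hq := hqg l hl m n
    rw [h0] at hq
    have tri1 := dist_triangle x (ρ₀ ((l m)⁻¹ * l n) x) (ρ ((l m)⁻¹ * l n) x)
    have tri2 := dist_triangle x (ρ ((l m)⁻¹ * l n) x) (ρ₀ ((l m)⁻¹ * l n) x)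
    have hcomm := dist_comm (ρ ((l m)⁻¹ * l n) x) (ρ₀ ((l m)⁻¹ * l n) x)
    constructor
    · rw [h1, hC₁def]
      linarith [hq.1]
    · rw [h1, hC₁def]
      linarith [hq.2]
  -- one-step upper bound
  have hstep1 : ∀ m : ℤ, dist (ρ (l m) x) (ρ (l (m+1)) x) ≤ K₀ + C₁ := by
    intro m
    have habs : |(m:ℝ) - (m+1:ℤ)| = 1 := by
      push_cast
      rw [show (m:ℝ) - (m+1) = -1 by ring]
      norm_num
    have h := (hloc m (m+1) (by rw [habs]; linarith)).2
    rw [habs] at h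
    linarith
  have hupper : ∀ (m : ℤ) (d : ℕ), dist (ρ (l m) x) (ρ (l (m + d)) x) ≤ (K₀ + C₁) * d := by
    intro m d
    induction d with
    | zero => simp [dist_self]
    | succ d ih =>
      have tri := dist_triangle (ρ (l m) x) (ρ (l (m + d)) x) (ρ (l (m + d + 1)) x)
      have hs := hstep1 (m + d)
      have e : (m + ((d:ℕ)+1:ℕ) : ℤ) = m + d + 1 := by push_cast; ring
      rw [e]
      push_cast
      linarith
  -- main bound for ordered pairs
  have main : ∀ m n : ℤ, m ≤ n →
      |(m:ℝ) - n| / (N:ℝ) - (K₀*(N:ℝ) + C₁ + 1) ≤ dist (ρ (l m) x) (ρ (l n) x) ∧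
        dist (ρ (l m) x) (ρ (l n) x) ≤ (N:ℝ) * |(m:ℝ) - n| + (K₀*(N:ℝ) + C₁ + 1) := by
    intro m n hmn
    set n' : ℕ := (n - m).toNat with hn'def
    have hn' : (n' : ℤ) = n - m := Int.toNat_of_nonneg (by omega)
    have habs : |(m:ℝ) - n| = (n' : ℝ) := by
      rw [abs_of_nonpos (by
        have : (m:ℝ) ≤ n := by exact_mod_cast hmn
        linarith)]
      have : ((n' : ℤ) : ℝ) = (n:ℝ) - m := by exact_mod_cast congrArg (Int.cast : ℤ → ℝ) hn'
      push_cast at this ⊢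
      linarith
    have hmn' : n = m + n' := by omega
    clear_value n'
    constructor
    · -- lower bound
      set q := n' / N with hq
      set r := n' % N with hr
      have hqr : N * q + r = n' := Nat.div_add_mod n' N
      have hrN : r < N := Nat.mod_lt _ (by omega)
      clear_value q r
      set z : ℕ → X := fun i => ρ (l (m + (i:ℤ) * (N:ℤ))) x with hz
      have habs2N : ∀ i' j' : ℕ, i' ≤ 2*N → j' ≤ 2*N → |(i':ℝ) - (j':ℝ)| ≤ 2*(N:ℝ) := by
        intro i' j' h1 h2
        have c1 : (i':ℝ) ≤ ((2*N:ℕ):ℝ) := Nat.cast_le.mpr h1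
        have c2 : (j':ℝ) ≤ ((2*N:ℕ):ℝ) := Nat.cast_le.mpr h2
        push_cast at c1 c2
        rw [abs_le]
        constructor
        · linarith [Nat.cast_nonneg (α := ℝ) j']
        · linarith [Nat.cast_nonneg (α := ℝ) i']
      have hzstep : ∀ i : ℕ, 2*cP + 2*δ + 1 ≤ dist (z i) (z (i+1)) := by
        intro i
        show 2*cP + 2*δ + 1 ≤ dist (ρ (l (m + (i:ℤ)*(N:ℤ))) x) (ρ (l (m + ((i+1:ℕ):ℤ)*(N:ℤ))) x)
        rw [show (m + ((i+1:ℕ):ℤ)*(N:ℤ)) = (m + (i:ℤ)*(N:ℤ)) + (N:ℤ) from by push_cast; ring]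
        have hd : |((m + (i:ℤ)*(N:ℤ) : ℤ):ℝ) - (((m + (i:ℤ)*(N:ℤ)) + (N:ℤ) : ℤ):ℝ)| = (N:ℝ) := by
          push_cast
          rw [show ((m:ℝ) + (i:ℝ)*(N:ℝ)) - ((m:ℝ) + (i:ℝ)*(N:ℝ) + (N:ℝ)) = -(N:ℝ) by ring]
          rw [abs_neg, abs_of_nonneg (by positivity)]
        have h := (hloc (m + (i:ℤ)*(N:ℤ)) ((m + (i:ℤ)*(N:ℤ)) + (N:ℤ)) (by rw [hd]; linarith)).1
        rw [hd] at h
        have hdiv : E + 1 + C₁ ≤ (N:ℝ)/K₀ := hNK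
        rw [hEdef] at hdiv
        linarith
      have hzprod : ∀ i : ℕ, gp (z (i+1)) (z i) (z (i+2)) ≤ cP := by
        intro i
        set w : ℕ → X := fun j => ρ (l ((m + (i:ℤ)*(N:ℤ)) + (j:ℤ))) x with hw
        have hwlow : ∀ i' ≤ 2*N, ∀ j' ≤ 2*N,
            |(i':ℝ) - (j':ℝ)| / K₀ - C₁ ≤ dist (w i') (w j') := by
          intro i' hi' j' hj'
          have harg : |(((m + (i:ℤ)*(N:ℤ)) + (i':ℤ) : ℤ):ℝ) - (((m + (i:ℤ)*(N:ℤ)) + (j':ℤ) : ℤ):ℝ)|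
              = |(i':ℝ) - (j':ℝ)| := by
            push_cast
            rw [show ((m:ℝ) + (i:ℝ)*(N:ℝ) + (i':ℝ)) - ((m:ℝ) + (i:ℝ)*(N:ℝ) + (j':ℝ))
              = (i':ℝ) - (j':ℝ) by ring]
          have h := (hloc ((m + (i:ℤ)*(N:ℤ)) + (i':ℤ)) ((m + (i:ℤ)*(N:ℤ)) + (j':ℤ))
            (by rw [harg]; exact habs2N i' j' hi' hj')).1
          rw [harg] at h
          exact h
        have hwup : ∀ i' ≤ 2*N, ∀ j' ≤ 2*N,
            dist (w i') (w j') ≤ K₀ * |(i':ℝ) - (j':ℝ)| + C₁ := by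
          intro i' hi' j' hj'
          have harg : |(((m + (i:ℤ)*(N:ℤ)) + (i':ℤ) : ℤ):ℝ) - (((m + (i:ℤ)*(N:ℤ)) + (j':ℤ) : ℤ):ℝ)|
              = |(i':ℝ) - (j':ℝ)| := by
            push_cast
            rw [show ((m:ℝ) + (i:ℝ)*(N:ℝ) + (i':ℝ)) - ((m:ℝ) + (i:ℝ)*(N:ℝ) + (j':ℝ))
              = (i':ℝ) - (j':ℝ) by ring]
          have h := (hloc ((m + (i:ℤ)*(N:ℤ)) + (i':ℤ)) ((m + (i:ℤ)*(N:ℤ)) + (j':ℤ))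
            (by rw [harg]; exact habs2N i' j' hi' hj')).2
          rw [harg] at h
          exact h
        have hwL1 : 1 ≤ dist (w 0) (w (2*N)) := by
          have h := hwlow 0 (by omega) (2*N) (le_refl _)
          have e0 : |((0:ℕ):ℝ) - ((2*N:ℕ):ℝ)| = 2*(N:ℝ) := by
            push_cast
            rw [show (0:ℝ) - 2*(N:ℝ) = -(2*(N:ℝ)) by ring, abs_neg,
              abs_of_nonneg (by positivity)]
          rw [e0] at h
          have hdiv : (2*(N:ℝ))/K₀ = 2*((N:ℝ)/K₀) := by ring
          rw [hdiv] at h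
          have := hNK
          rw [hEdef] at this
          nlinarith [hcP0, hδ, hC]
        have hgpmid := mid_gp δ hδ H hgeo hK hC N hN1 w hwlow hwup hwL1
        have ew0 : w 0 = z i := by
          show ρ (l ((m + (i:ℤ)*(N:ℤ)) + ((0:ℕ):ℤ))) x = ρ (l (m + (i:ℤ)*(N:ℤ))) x
          rw [show ((m + (i:ℤ)*(N:ℤ)) + ((0:ℕ):ℤ)) = m + (i:ℤ)*(N:ℤ) from by push_cast; ring]
        have ewN : w N = z (i+1) := by
          show ρ (l ((m + (i:ℤ)*(N:ℤ)) + ((N:ℕ):ℤ))) x = ρ (l (m + ((i+1:ℕ):ℤ)*(N:ℤ))) x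
          rw [show ((m + (i:ℤ)*(N:ℤ)) + ((N:ℕ):ℤ)) = m + ((i+1:ℕ):ℤ)*(N:ℤ) from by
            push_cast; ring]
        have ew2N : w (2*N) = z (i+2) := by
          show ρ (l ((m + (i:ℤ)*(N:ℤ)) + ((2*N:ℕ):ℤ))) x = ρ (l (m + ((i+2:ℕ):ℤ)*(N:ℤ))) x
          rw [show ((m + (i:ℤ)*(N:ℤ)) + ((2*N:ℕ):ℤ)) = m + ((i+2:ℕ):ℤ)*(N:ℤ) from by
            push_cast; ring]
        rw [ew0, ewN, ew2N] at hgpmid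
        rw [← hcPdef] at hgpmid
        exact hgpmid
      have hchain := chain_progress δ hδ H hcP0 z hzstep hzprod q
      have hz0 : z 0 = ρ (l m) x := by
        show ρ (l (m + ((0:ℕ):ℤ)*(N:ℤ))) x = ρ (l m) x
        rw [show (m + ((0:ℕ):ℤ)*(N:ℤ)) = m from by push_cast; ring]
      have hrem : dist (z q) (ρ (l n) x) ≤ K₀*(N:ℝ) + C₁ := by
        have hnzq : (n:ℤ) = (m + (q:ℤ)*(N:ℤ)) + (r:ℤ) := by
          have h1 : ((N * q + r : ℕ) : ℤ) = (n' : ℤ) := by exact_mod_cast hqr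
          push_cast at h1
          linarith [hn']
        have harg : |((m + (q:ℤ)*(N:ℤ) : ℤ):ℝ) - (n:ℝ)| = (r:ℝ) := by
          have : ((n:ℤ):ℝ) = ((m + (q:ℤ)*(N:ℤ) + (r:ℤ) : ℤ):ℝ) := by exact_mod_cast hnzq
          push_cast at this
          push_cast
          rw [show (m:ℝ) + (q:ℝ)*(N:ℝ) - (n:ℝ) = -((n:ℝ) - ((m:ℝ) + (q:ℝ)*(N:ℝ))) by ring,
            abs_neg]
          rw [show (n:ℝ) - ((m:ℝ) + (q:ℝ)*(N:ℝ)) = (r:ℝ) by linarith]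
          exact abs_of_nonneg (Nat.cast_nonneg r)
        have hrle : (r:ℝ) ≤ 2*(N:ℝ) := by
          have : (r:ℝ) ≤ (N:ℝ) := by exact_mod_cast hrN.le
          linarith
        have h := (hloc (m + (q:ℤ)*(N:ℤ)) n (by rw [harg]; exact hrle)).2
        rw [harg] at h
        have : K₀ * (r:ℝ) ≤ K₀ * (N:ℝ) :=
          mul_le_mul_of_nonneg_left (by exact_mod_cast hrN.le) (by linarith)
        calc dist (z q) (ρ (l n) x) ≤ K₀ * (r:ℝ) + C₁ := h
          _ ≤ K₀*(N:ℝ) + C₁ := by linarith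
      have htri := dist_triangle (z 0) (ρ (l n) x) (z q)
      have hqn' : (n':ℝ) = (N:ℝ)*(q:ℝ) + (r:ℝ) := by exact_mod_cast hqr.symm
      have hdivq : (n':ℝ)/(N:ℝ) ≤ (q:ℝ) + 1 := by
        rw [div_le_iff₀ (by linarith : (0:ℝ) < (N:ℝ))]
        have hrn : (r:ℝ) ≤ (N:ℝ) := by exact_mod_cast hrN.le
        linarith [hqn', hrn]
      rw [habs]
      rw [← hz0]
      have hcd := dist_comm (ρ (l n) x) (z q)
      have hNpos : (0:ℝ) < (N:ℝ) := by linarith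
      linarith [hchain]
    · -- upper bound
      rw [habs, hmn']
      have h := hupper m n'
      have hmul : (K₀ + C₁) * (n':ℝ) ≤ (N:ℝ) * n' :=
        mul_le_mul_of_nonneg_right hKCN (Nat.cast_nonneg _)
      have hC1 : 0 ≤ K₀*(N:ℝ) + C₁ + 1 := by positivity
      linarith
  intro m n
  rcases le_total m n with h | h
  · exact main m n h
  · have hres := main n m h
    rw [dist_comm, abs_sub_comm]
    exact hres
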